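/- Let P and Q be orthogonal projections on a Hilbert space H with ‖P − Q‖ < 1. Then Ran Q is the graph of a bounded linear operator X : Ran P → Ran P^⊥, i.e. Ran Q = { f + X f : f ∈ Ran P }, and ‖P − Q‖ = ‖X‖ / √(1 + ‖X‖²). -/

import Mathlib

section RingAux

variable {R : Type*} [Ring R] (p q b : R)

lemma pqAux_ps (hp : p*p = p) (hq : q*q = q) :
    p * ((p-q)*(p-q)) = ((p-q)*(p-q)) * p := by
  have hp' : ∀ x : R, x*p*p = x*p := fun x => by rw [mul_assoc, hp]
  have hq' : ∀ x : R, x*q*q = x*q := fun x => by rw [mul_assoc, hq]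
  simp only [mul_sub, sub_mul, mul_add, add_mul, mul_one, one_mul, ← mul_assoc, hp, hq, hp', hq']
  abel

lemma pqAux_comm_s {s : R} (hps : p * s = s * p) :
    p * (1 - s) = (1 - s) * p := by
  rw [mul_one_sub, one_sub_mul, hps]

/-- if x commutes with 1-s then x commutes with b, the inverse of 1-s -/
lemma pqAux_comm_b {s x : R}
    (hb1 : (1 - s) * b = 1) (hb2 : b * (1 - s) = 1)
    (hxs : x * (1 - s) = (1 - s) * x) :
    x * b = b * x := by
  calc x * b = (b * (1 - s)) * (x * b) := by rw [hb2, one_mul]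
    _ = b * ((1 - s) * x * b) := by simp only [mul_assoc]
    _ = b * (x * (1 - s) * b) := by rw [hxs]
    _ = b * x := by rw [mul_assoc, hb1, mul_one]

lemma pqAux_star_b {R : Type*} [Ring R] [StarRing R] {s b : R} (hs : star s = s)
    (hb1 : (1 - s) * b = 1) :
    star b = b := by
  have h1 : star b * (1 - s) = 1 := by
    have h := congrArg star hb1
    rwa [star_mul, star_sub, star_one, hs] at h
  calc star b = star b * ((1 - s) * b) := by rw [hb1, mul_one]
    _ = (star b * (1 - s)) * b := by rw [mul_assoc]
    _ = b := by rw [h1, one_mul]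

end RingAux

section RingAux3

variable {R : Type*} [Ring R] {p q b : R}

variable (hp : p*p = p) (hq : q*q = q)
  (hbp : b*p = p*b) (hbq : b*q = q*b)

include hp hq hbp hbq

lemma pqAux_yp : (1-p)*q*p*b*p = (1-p)*q*p*b := by
  have hpx : ∀ x : R, p*(p*x) = p*x := fun x => by rw [← mul_assoc, hp]
  have hqx : ∀ x : R, q*(q*x) = q*x := fun x => by rw [← mul_assoc, hq]
  have hbpx : ∀ x : R, b*(p*x) = p*(b*x) := fun x => by rw [← mul_assoc, hbp, mul_assoc]
  have hbqx : ∀ x : R, b*(q*x) = q*(b*x) := fun x => by rw [← mul_assoc, hbq, mul_assoc]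
  simp only [mul_sub, sub_mul, mul_add, add_mul, mul_one, one_mul, mul_assoc,
    hp, hq, hpx, hqx, hbp, hbq, hbpx, hbqx]
  try abel

lemma pqAux_py : p*((1 - (p-q)*(p-q))*b) + (1-p)*q*p*b = q*p*b := by
  have hpx : ∀ x : R, p*(p*x) = p*x := fun x => by rw [← mul_assoc, hp]
  have hqx : ∀ x : R, q*(q*x) = q*x := fun x => by rw [← mul_assoc, hq]
  have hbpx : ∀ x : R, b*(p*x) = p*(b*x) := fun x => by rw [← mul_assoc, hbp, mul_assoc]
  have hbqx : ∀ x : R, b*(q*x) = q*(b*x) := fun x => by rw [← mul_assoc, hbq, mul_assoc]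
  simp only [mul_sub, sub_mul, mul_add, add_mul, mul_one, one_mul, mul_assoc,
    hp, hq, hpx, hqx, hbp, hbq, hbpx, hbqx]
  try abel

lemma pqAux_qpbq : q*p*b*q = q*((1 - (p-q)*(p-q))*b) := by
  have hpx : ∀ x : R, p*(p*x) = p*x := fun x => by rw [← mul_assoc, hp]
  have hqx : ∀ x : R, q*(q*x) = q*x := fun x => by rw [← mul_assoc, hq]
  have hbpx : ∀ x : R, b*(p*x) = p*(b*x) := fun x => by rw [← mul_assoc, hbp, mul_assoc]
  have hbqx : ∀ x : R, b*(q*x) = q*(b*x) := fun x => by rw [← mul_assoc, hbq, mul_assoc]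
  simp only [mul_sub, sub_mul, mul_add, add_mul, mul_one, one_mul, mul_assoc,
    hp, hq, hpx, hqx, hbp, hbq, hbpx, hbqx]
  try abel

lemma pqAux_ysy :
    (b*(p*(q*(1-p)))) * ((1-p)*q*p*b)
      = ((p-q)*(p-q)) * ((1 - (p-q)*(p-q))*b) * (b*p) := by
  have hpx : ∀ x : R, p*(p*x) = p*x := fun x => by rw [← mul_assoc, hp]
  have hqx : ∀ x : R, q*(q*x) = q*x := fun x => by rw [← mul_assoc, hq]
  have hbpx : ∀ x : R, b*(p*x) = p*(b*x) := fun x => by rw [← mul_assoc, hbp, mul_assoc]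
  have hbqx : ∀ x : R, b*(q*x) = q*(b*x) := fun x => by rw [← mul_assoc, hbq, mul_assoc]
  simp only [mul_sub, sub_mul, mul_add, add_mul, mul_one, one_mul, mul_assoc,
    hp, hq, hpx, hqx, hbp, hbq, hbpx, hbqx]
  try abel

lemma pqAux_yys :
    ((1-p)*q*p*b) * (b*(p*(q*(1-p))))
      = ((p-q)*(p-q)) * ((1 - (p-q)*(p-q))*b) * (b*(1-p)) := by
  have hpx : ∀ x : R, p*(p*x) = p*x := fun x => by rw [← mul_assoc, hp]
  have hqx : ∀ x : R, q*(q*x) = q*x := fun x => by rw [← mul_assoc, hq]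
  have hbpx : ∀ x : R, b*(p*x) = p*(b*x) := fun x => by rw [← mul_assoc, hbp, mul_assoc]
  have hbqx : ∀ x : R, b*(q*x) = q*(b*x) := fun x => by rw [← mul_assoc, hbq, mul_assoc]
  simp only [mul_sub, sub_mul, mul_add, add_mul, mul_one, one_mul, mul_assoc,
    hp, hq, hpx, hqx, hbp, hbq, hbpx, hbqx]
  try abel

end RingAux3

section SpecAux

variable {R : Type*} [Ring R] [Algebra ℂ R]

lemma pqAux_sqfactor (d : R) (c : ℂ) :
    algebraMap ℂ R (c^2) - d*d = (algebraMap ℂ R c - d) * (algebraMap ℂ R c + d) := by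
  have hc := Algebra.commutes c d
  rw [pow_two, sub_mul, mul_add, mul_add, ← map_mul, hc]
  abel

lemma pqAux_sqfactor' (d : R) (c : ℂ) :
    algebraMap ℂ R (c^2) - d*d = (algebraMap ℂ R c + d) * (algebraMap ℂ R c - d) := by
  have hc := Algebra.commutes c d
  rw [pow_two, add_mul, mul_sub, mul_sub, ← map_mul, hc]
  abel

lemma pqAux_spec (s b : R) (hb2 : b * (1 - s) = 1) (α : ℂ) (hα : 1 - α ≠ 0) :
    (algebraMap ℂ R (α/(1-α)) - s*b) * ((algebraMap ℂ R (1-α)) * (1-s))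
      = algebraMap ℂ R α - s := by
  have e1 : algebraMap ℂ R (α/(1-α)) * algebraMap ℂ R (1-α) = algebraMap ℂ R α := by
    rw [← map_mul, div_mul_cancel₀ _ hα]
  have e2 : (s*b) * ((algebraMap ℂ R (1-α)) * (1-s)) = s * algebraMap ℂ R (1-α) := by
    calc (s*b) * ((algebraMap ℂ R (1-α)) * (1-s))
        = s * ((b * algebraMap ℂ R (1-α)) * (1-s)) := by simp only [mul_assoc]
      _ = s * ((algebraMap ℂ R (1-α) * b) * (1-s)) := by rw [← Algebra.commutes]
      _ = s * (algebraMap ℂ R (1-α) * (b * (1-s))) := by rw [mul_assoc]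
      _ = s * algebraMap ℂ R (1-α) := by rw [hb2, mul_one]
  rw [sub_mul, e2, ← mul_assoc, e1]
  have e3 : algebraMap ℂ R α + algebraMap ℂ R (1-α) = 1 := by
    rw [← map_add, add_sub_cancel, map_one]
  calc algebraMap ℂ R α * (1-s) - s * algebraMap ℂ R (1-α)
      = algebraMap ℂ R α - (algebraMap ℂ R α + algebraMap ℂ R (1-α)) * s := by
        rw [mul_one_sub, ← Algebra.commutes (1-α) s, add_mul]; abel
    _ = algebraMap ℂ R α - s := by rw [e3, one_mul]

end SpecAux

set_option maxHeartbeats 2000000 in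
/-- **Graph representation of a pair of projections.** If `P` and `Q` are orthogonal
projections on a Hilbert space `H` with `‖P − Q‖ < 1`, then `Ran Q` is the graph of a
bounded operator `X : Ran P → Ran P^⊥`, i.e. `Ran Q = { f + X f : f ∈ Ran P }`, and
`‖P − Q‖ = ‖X‖ / √(1 + ‖X‖²)`. -/
theorem range_eq_graph_of_norm_diff_projections_lt_one
    {H : Type*} [NormedAddCommGroup H] [InnerProductSpace ℂ H] [CompleteSpace H]
    (P Q : H →L[ℂ] H)
    (hP : IsSelfAdjoint P) (hP2 : P * P = P)
    (hQ : IsSelfAdjoint Q) (hQ2 : Q * Q = Q)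
    (h : ‖P - Q‖ < 1) :
    ∃ X : ↥(LinearMap.range (P : H →ₗ[ℂ] H)) →L[ℂ] ↥(LinearMap.range ((1 - P : H →L[ℂ] H) : H →ₗ[ℂ] H)),
      (LinearMap.range (Q : H →ₗ[ℂ] H) : Set H) =
        {x : H | ∃ f : ↥(LinearMap.range (P : H →ₗ[ℂ] H)), x = (f : H) + (X f : H)} ∧
      ‖P - Q‖ = ‖X‖ / Real.sqrt (1 + ‖X‖ ^ 2) := by
  rcases eq_or_lt_of_le (norm_nonneg (P - Q)) with h0 | hpos
  · -- degenerate case: P = Q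
    have hPQ : P = Q := by
      rw [← sub_eq_zero]
      exact norm_eq_zero.mp h0.symm
    refine ⟨0, ?_, ?_⟩
    · ext x
      simp only [Set.mem_setOf_eq, SetLike.mem_coe, LinearMap.mem_range]
      constructor
      · rintro ⟨w, rfl⟩
        refine ⟨⟨Q w, by rw [hPQ]; exact ⟨w, rfl⟩⟩, by simp; rfl⟩
      · rintro ⟨⟨v, hv⟩, rfl⟩
        simp only [ContinuousLinearMap.zero_apply, ZeroMemClass.coe_zero, add_zero]
        rw [← hPQ]
        exact hv
    · rw [← h0, ContinuousLinearMap.opNorm_zero]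
      norm_num
  · -- main case : 0 < ‖P - Q‖
    have hDsa : IsSelfAdjoint (P - Q) := hP.sub hQ
    have hSsa : star ((P-Q)*(P-Q)) = (P-Q)*(P-Q) := by rw [star_mul, hDsa.star_eq]
    have hSnorm : ‖(P-Q)*(P-Q)‖ = ‖P-Q‖^2 := by
      nth_rewrite 1 [← hDsa.star_eq]
      rw [CStarRing.norm_star_mul_self, pow_two]
    have hS1 : ‖(P-Q)*(P-Q)‖ < 1 := by
      rw [hSnorm]; nlinarith [norm_nonneg (P-Q)]
    set u : (H →L[ℂ] H)ˣ := Units.oneSub ((P-Q)*(P-Q)) hS1 with hu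
    set B : H →L[ℂ] H := ↑u⁻¹ with hBdef
    have hb1 : (1 - (P-Q)*(P-Q)) * B = 1 := u.mul_inv
    have hb2 : B * (1 - (P-Q)*(P-Q)) = 1 := u.inv_mul
    have hps := pqAux_ps P Q hP2 hQ2
    have hqs : Q * ((P-Q)*(P-Q)) = ((P-Q)*(P-Q)) * Q := by
      have h4 := pqAux_ps Q P hQ2 hP2
      rwa [show (Q-P)*(Q-P) = (P-Q)*(P-Q) from by noncomm_ring] at h4
    have hPB : P * B = B * P := pqAux_comm_b B hb1 hb2 (pqAux_comm_s P hps)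
    have hQB : Q * B = B * Q := pqAux_comm_b B hb1 hb2 (pqAux_comm_s Q hqs)
    have hBstar : star B = B := pqAux_star_b hSsa hb1
    set Y : H →L[ℂ] H := (1-P)*Q*P*B with hYdef
    set m : ℝ := ‖Y‖ with hm
    have hyp : Y * P = Y := pqAux_yp hP2 hQ2 hPB.symm hQB.symm
    have hpy : P + Y = Q*P*B := by
      have h5 := pqAux_py hP2 hQ2 hPB.symm hQB.symm
      rwa [hb1, mul_one] at h5
    have hqpbq : (Q*P*B)*Q = Q := by
      have h6 := pqAux_qpbq hP2 hQ2 hPB.symm hQB.symm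
      rwa [hb1, mul_one] at h6
    have hstarY : star Y = B * (P * (Q * (1-P))) := by
      rw [hYdef]
      simp only [star_mul, star_sub, star_one, hP.star_eq, hQ.star_eq, hBstar]
    have hYsY : star Y * Y = ((P-Q)*(P-Q))*(B*P) := by
      rw [hstarY, hYdef]
      have h7 := pqAux_ysy hP2 hQ2 hPB.symm hQB.symm
      rwa [hb1, mul_one] at h7
    have hYYs : Y * star Y = ((P-Q)*(P-Q))*(B*(1-P)) := by
      rw [hstarY, hYdef]
      have h8 := pqAux_yys hP2 hQ2 hPB.symm hQB.symm
      rwa [hb1, mul_one] at h8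
    -- norms via C*-identity
    have hmP : ‖((P-Q)*(P-Q))*(B*P)‖ = m^2 := by
      rw [← hYsY, CStarRing.norm_star_mul_self, hm, pow_two]
    have hmP' : ‖((P-Q)*(P-Q))*(B*(1-P))‖ = m^2 := by
      rw [← hYYs, CStarRing.norm_self_mul_star, hm, pow_two]
    -- selfadjoint operators move across the inner product
    have inner_move : ∀ (R : H →L[ℂ] H), IsSelfAdjoint R → ∀ w v : H,
        (inner ℂ (R w) v : ℂ) = inner ℂ w (R v) := by
      intro R hR w v
      conv_lhs => rw [← hR.adjoint_eq]
      exact ContinuousLinearMap.adjoint_inner_left R v w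
    -- selfadjoint idempotents are contractions
    have contr : ∀ (R : H →L[ℂ] H), IsSelfAdjoint R → R * R = R → ∀ x : H, ‖R x‖ ≤ ‖x‖ := by
      intro R hR hR2 x
      have h1 : (inner ℂ (R x) (R x) : ℂ) = inner ℂ x (R x) := by
        rw [inner_move R hR x (R x), ← ContinuousLinearMap.mul_apply, hR2]
      have h3 : ‖(inner ℂ x (R x) : ℂ)‖ = ‖R x‖^2 := by
        rw [← h1, inner_self_eq_norm_sq_to_K]
        simp [norm_pow]
      have h4 := norm_inner_le_norm (𝕜 := ℂ) x (R x)
      rw [h3] at h4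
      nlinarith [norm_nonneg (R x), norm_nonneg x]
    have hP'sa : IsSelfAdjoint (1 - P) := (IsSelfAdjoint.one (R := H →L[ℂ] H)).sub hP
    have hP'2 : (1-P)*(1-P) = 1-P := by
      rw [mul_one_sub, one_sub_mul, hP2]; abel
    -- orthogonal decomposition of norms
    have horth : ∀ x : H, ‖P x‖^2 + ‖(1-P) x‖^2 = ‖x‖^2 := by
      intro x
      have hzero : (inner ℂ (P x) ((1-P) x) : ℂ) = 0 := by
        rw [inner_move P hP x ((1-P) x), ← ContinuousLinearMap.mul_apply,
          show P * (1-P) = 0 from by rw [mul_one_sub, hP2]; abel]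
        simp
      have hsum : P x + (1-P) x = x := by
        simp [ContinuousLinearMap.sub_apply]
      have hh := (norm_add_sq_eq_norm_sq_add_norm_sq_of_inner_eq_zero _ _ hzero).symm
      rw [hsum] at hh
      calc ‖P x‖^2 + ‖(1-P) x‖^2
          = ‖P x‖ * ‖P x‖ + ‖(1-P) x‖ * ‖(1-P) x‖ := by ring
        _ = ‖x‖ * ‖x‖ := hh
        _ = ‖x‖^2 := by ring
    -- nontriviality
    haveI : Nontrivial H := by
      by_contra hc
      rw [not_nontrivial_iff_subsingleton] at hc
      have hz : P - Q = 0 := by ext x; exact Subsingleton.elim _ _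
      rw [hz, norm_zero] at hpos
      exact lt_irrefl 0 hpos
    haveI : Nontrivial (H →L[ℂ] H) := by
      refine ⟨0, 1, fun heq => ?_⟩
      obtain ⟨v, hv⟩ := exists_ne (0 : H)
      have hv2 : (0 : H →L[ℂ] H) v = (1 : H →L[ℂ] H) v := by rw [heq]
      simp only [ContinuousLinearMap.zero_apply, ContinuousLinearMap.one_apply] at hv2
      exact hv hv2.symm
    -- spectral lower bound for ‖S⬝B‖
    obtain ⟨z, hz_mem, hz_rad⟩ := spectrum.exists_nnnorm_eq_spectralRadius (P - Q)
    have hz_nn : ‖z‖₊ = ‖P - Q‖₊ := by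
      rw [hDsa.spectralRadius_eq_nnnorm] at hz_rad
      exact_mod_cast hz_rad
    have hz_norm : ‖z‖ = ‖P - Q‖ := by
      simpa using congrArg NNReal.toReal hz_nn
    have hz_re : z = (z.re : ℂ) := hDsa.mem_spectrum_eq_re hz_mem
    have hre_cases : z.re = ‖P-Q‖ ∨ z.re = -‖P-Q‖ := by
      apply (abs_eq (norm_nonneg (P-Q))).mp
      rw [← hz_norm]
      conv_rhs => rw [hz_re]
      simp [Real.norm_eq_abs]
    have hnotunit : ¬ IsUnit
        (algebraMap ℂ (H →L[ℂ] H) (((‖P-Q‖ : ℝ) : ℂ)^2) - (P-Q)*(P-Q)) := by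
      intro hu
      rw [pqAux_sqfactor] at hu
      have hcomm : Commute (algebraMap ℂ (H →L[ℂ] H) ((‖P-Q‖:ℝ):ℂ) - (P-Q))
          (algebraMap ℂ (H →L[ℂ] H) ((‖P-Q‖:ℝ):ℂ) + (P-Q)) := by
        unfold Commute SemiconjBy
        rw [← pqAux_sqfactor, pqAux_sqfactor']
      obtain ⟨hu1, hu2⟩ := hcomm.isUnit_mul_iff.mp hu
      have hnu := spectrum.mem_iff.mp hz_mem
      rcases hre_cases with hc | hc
      · have hza : z = ((‖P-Q‖:ℝ):ℂ) := by rw [hz_re, hc]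
        rw [hza] at hnu
        exact hnu hu1
      · have hza : z = -((‖P-Q‖:ℝ):ℂ) := by rw [hz_re, hc]; push_cast; ring
        rw [hza] at hnu
        apply hnu
        rw [map_neg, show -(algebraMap ℂ (H →L[ℂ] H) ((‖P-Q‖:ℝ):ℂ)) - (P-Q)
          = -((algebraMap ℂ (H →L[ℂ] H) ((‖P-Q‖:ℝ):ℂ)) + (P-Q)) from by abel]
        exact hu2.neg
    have h1ma : (0:ℝ) < 1 - ‖P-Q‖^2 := by nlinarith [norm_nonneg (P-Q)]
    have hα : (1 : ℂ) - ((‖P-Q‖:ℝ):ℂ)^2 ≠ 0 := by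
      intro hzero
      have hre : ((1 - ‖P-Q‖^2 : ℝ) : ℂ) = 0 := by push_cast; linear_combination hzero
      rw [Complex.ofReal_eq_zero] at hre
      linarith
    have hcmem : (((‖P-Q‖^2/(1-‖P-Q‖^2) : ℝ)) : ℂ)
        ∈ spectrum ℂ ((P-Q)*(P-Q)*B) := by
      rw [spectrum.mem_iff]
      intro hu
      have hcast : (((‖P-Q‖^2/(1-‖P-Q‖^2) : ℝ)) : ℂ)
          = ((‖P-Q‖:ℝ):ℂ)^2 / (1 - ((‖P-Q‖:ℝ):ℂ)^2) := by push_cast; ring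
      rw [hcast] at hu
      have hunit2 : IsUnit ((algebraMap ℂ (H →L[ℂ] H) (1 - ((‖P-Q‖:ℝ):ℂ)^2))
          * (1 - (P-Q)*(P-Q))) :=
        (((algebraMap ℂ (H →L[ℂ] H)).isUnit_map (isUnit_iff_ne_zero.mpr hα))).mul u.isUnit
      have hu3 := hu.mul hunit2
      rw [pqAux_spec ((P-Q)*(P-Q)) B hb2 (((‖P-Q‖:ℝ):ℂ)^2) hα] at hu3
      exact hnotunit hu3
    have hTlow : ‖P-Q‖^2/(1-‖P-Q‖^2) ≤ ‖(P-Q)*(P-Q)*B‖ := by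
      have h11 := spectrum.norm_le_norm_of_mem hcmem
      rwa [Complex.norm_real, Real.norm_eq_abs,
        abs_of_nonneg (div_nonneg (sq_nonneg _) (le_of_lt h1ma))] at h11
    have hBle : ‖B‖ ≤ (1 - ‖P-Q‖^2)⁻¹ := by
      have hexp : B = 1 + ((P-Q)*(P-Q))*B := by
        have h12 := hb1
        rw [sub_mul, one_mul] at h12
        rw [sub_eq_iff_eq_add] at h12
        exact h12
      have h9 : ‖B‖ ≤ 1 + ‖P-Q‖^2 * ‖B‖ := by
        calc ‖B‖ = ‖1 + ((P-Q)*(P-Q))*B‖ := by rw [← hexp]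
          _ ≤ ‖(1 : H →L[ℂ] H)‖ + ‖((P-Q)*(P-Q))*B‖ := norm_add_le _ _
          _ ≤ 1 + ‖P-Q‖^2 * ‖B‖ := by
              rw [norm_one]
              have := norm_mul_le ((P-Q)*(P-Q)) B
              rw [hSnorm] at this
              linarith
      rw [inv_eq_one_div, le_div_iff₀ h1ma]
      calc ‖B‖ * (1 - ‖P-Q‖^2) = ‖B‖ - ‖P-Q‖^2 * ‖B‖ := by ring
        _ ≤ 1 := by linarith
    have hTup : ‖(P-Q)*(P-Q)*B‖ ≤ ‖P-Q‖^2/(1-‖P-Q‖^2) := by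
      calc ‖(P-Q)*(P-Q)*B‖ ≤ ‖(P-Q)*(P-Q)‖ * ‖B‖ := norm_mul_le _ _
        _ ≤ ‖P-Q‖^2 * (1-‖P-Q‖^2)⁻¹ := by
            rw [hSnorm]
            exact mul_le_mul_of_nonneg_left hBle (sq_nonneg _)
        _ = ‖P-Q‖^2/(1-‖P-Q‖^2) := by rw [div_eq_mul_inv]
    have hTnorm : ‖(P-Q)*(P-Q)*B‖ = ‖P-Q‖^2/(1-‖P-Q‖^2) := le_antisymm hTup hTlow
    -- T commutes with P
    have hcommTP : P * ((P-Q)*(P-Q)*B) = ((P-Q)*(P-Q)*B) * P := by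
      calc P * ((P-Q)*(P-Q)*B) = (P*((P-Q)*(P-Q)))*B := by rw [← mul_assoc]
        _ = ((P-Q)*(P-Q))*(P*B) := by rw [hps, mul_assoc]
        _ = ((P-Q)*(P-Q))*(B*P) := by rw [hPB]
        _ = ((P-Q)*(P-Q)*B)*P := by rw [← mul_assoc]
    have hcommTP' : (1-P) * ((P-Q)*(P-Q)*B) = ((P-Q)*(P-Q)*B) * (1-P) := by
      rw [one_sub_mul, mul_one_sub, hcommTP]
    have hTPas : ((P-Q)*(P-Q)*B)*P = (P-Q)*(P-Q)*(B*P) := by rw [mul_assoc]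
    have hTP'as : ((P-Q)*(P-Q)*B)*(1-P) = (P-Q)*(P-Q)*(B*(1-P)) := by rw [mul_assoc]
    have ePP : ∀ x : H, P (P x) = P x := fun x => by
      rw [← ContinuousLinearMap.mul_apply, hP2]
    have eP'P' : ∀ x : H, (1-P) ((1-P) x) = (1-P) x := fun x => by
      rw [← ContinuousLinearMap.mul_apply, hP'2]
    -- ‖T‖ ≤ m²
    have hTm : ‖(P-Q)*(P-Q)*B‖ ≤ m^2 := by
      refine ContinuousLinearMap.opNorm_le_bound _ (sq_nonneg m) (fun x => ?_)
      have e1 : P (((P-Q)*(P-Q)*B) x) = (((P-Q)*(P-Q)*B)*P) (P x) := by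
        calc P (((P-Q)*(P-Q)*B) x) = (P*((P-Q)*(P-Q)*B)) x :=
              (ContinuousLinearMap.mul_apply _ _ _).symm
          _ = (((P-Q)*(P-Q)*B)*P) x := by rw [hcommTP]
          _ = ((P-Q)*(P-Q)*B) (P x) := ContinuousLinearMap.mul_apply _ _ _
          _ = ((P-Q)*(P-Q)*B) (P (P x)) := by rw [ePP]
          _ = (((P-Q)*(P-Q)*B)*P) (P x) := (ContinuousLinearMap.mul_apply _ _ _).symm
      have e2 : (1-P) (((P-Q)*(P-Q)*B) x) = (((P-Q)*(P-Q)*B)*(1-P)) ((1-P) x) := by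
        calc (1-P) (((P-Q)*(P-Q)*B) x) = ((1-P)*((P-Q)*(P-Q)*B)) x :=
              (ContinuousLinearMap.mul_apply _ _ _).symm
          _ = (((P-Q)*(P-Q)*B)*(1-P)) x := by rw [hcommTP']
          _ = ((P-Q)*(P-Q)*B) ((1-P) x) := ContinuousLinearMap.mul_apply _ _ _
          _ = ((P-Q)*(P-Q)*B) ((1-P) ((1-P) x)) := by rw [eP'P']
          _ = (((P-Q)*(P-Q)*B)*(1-P)) ((1-P) x) := (ContinuousLinearMap.mul_apply _ _ _).symm
      have u1 : ‖P (((P-Q)*(P-Q)*B) x)‖ ≤ m^2 * ‖P x‖ := by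
        rw [e1]
        have h13 := ContinuousLinearMap.le_opNorm (((P-Q)*(P-Q)*B)*P) (P x)
        rwa [hTPas, hmP] at h13
      have u2 : ‖(1-P) (((P-Q)*(P-Q)*B) x)‖ ≤ m^2 * ‖(1-P) x‖ := by
        rw [e2]
        have h14 := ContinuousLinearMap.le_opNorm (((P-Q)*(P-Q)*B)*(1-P)) ((1-P) x)
        rwa [hTP'as, hmP'] at h14
      have hsq2 : ‖((P-Q)*(P-Q)*B) x‖^2 ≤ (m^2*‖x‖)^2 := by
        calc ‖((P-Q)*(P-Q)*B) x‖^2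
            = ‖P (((P-Q)*(P-Q)*B) x)‖^2 + ‖(1-P) (((P-Q)*(P-Q)*B) x)‖^2 := (horth _).symm
          _ ≤ (m^2*‖P x‖)^2 + (m^2*‖(1-P) x‖)^2 :=
              add_le_add (pow_le_pow_left₀ (norm_nonneg _) u1 2)
                (pow_le_pow_left₀ (norm_nonneg _) u2 2)
          _ = (m^2)^2 * (‖P x‖^2 + ‖(1-P) x‖^2) := by ring
          _ = (m^2)^2 * ‖x‖^2 := by rw [horth]
          _ = (m^2*‖x‖)^2 := by ring
      nlinarith [norm_nonneg (((P-Q)*(P-Q)*B) x),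
        mul_nonneg (sq_nonneg m) (norm_nonneg x)]
    -- m² ≤ ‖T‖
    have hmT : m^2 ≤ ‖(P-Q)*(P-Q)*B‖ := by
      rw [← hmP, ← hTPas]
      refine ContinuousLinearMap.opNorm_le_bound _ (norm_nonneg _) (fun x => ?_)
      calc ‖(((P-Q)*(P-Q)*B)*P) x‖ = ‖((P-Q)*(P-Q)*B) (P x)‖ := by
            rw [ContinuousLinearMap.mul_apply]
        _ ≤ ‖(P-Q)*(P-Q)*B‖ * ‖P x‖ := ContinuousLinearMap.le_opNorm _ _
        _ ≤ ‖(P-Q)*(P-Q)*B‖ * ‖x‖ :=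
            mul_le_mul_of_nonneg_left (contr P hP hP2 x) (norm_nonneg _)
    have hm2eq : m^2 = ‖P-Q‖^2/(1-‖P-Q‖^2) := by
      rw [← hTnorm]; exact le_antisymm hmT hTm
    -- construct X
    have hYassoc : (1-P)*(Q*(P*B)) = Y := by
      rw [hYdef]; simp only [mul_assoc]
    have hYmem : ∀ v : H, Y v ∈ LinearMap.range ((1 - P : H →L[ℂ] H) : H →ₗ[ℂ] H) := by
      intro v
      refine LinearMap.mem_range.mpr ⟨(Q*(P*B)) v, ?_⟩
      calc (1-P) ((Q*(P*B)) v) = ((1-P)*(Q*(P*B))) v :=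
            (ContinuousLinearMap.mul_apply _ _ _).symm
        _ = Y v := by rw [hYassoc]
    set X : ↥(LinearMap.range (P : H →ₗ[ℂ] H)) →L[ℂ] ↥(LinearMap.range ((1 - P : H →L[ℂ] H) : H →ₗ[ℂ] H)) :=
      ContinuousLinearMap.codRestrict
        (Y.comp (Submodule.subtypeL (LinearMap.range (P : H →ₗ[ℂ] H))))
        (LinearMap.range ((1 - P : H →L[ℂ] H) : H →ₗ[ℂ] H)) (fun f => hYmem _) with hXdef
    have hXapp : ∀ f : ↥(LinearMap.range (P : H →ₗ[ℂ] H)), (X f : H) = Y (f : H) := fun f => rfl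
    refine ⟨X, ?_, ?_⟩
    · -- the graph description
      ext x
      simp only [Set.mem_setOf_eq, SetLike.mem_coe, LinearMap.mem_range]
      constructor
      · rintro ⟨w, rfl⟩
        refine ⟨⟨P (Q w), LinearMap.mem_range.mpr ⟨Q w, rfl⟩⟩, ?_⟩
        rw [hXapp]
        show Q w = P (Q w) + Y (P (Q w))
        have hYPapp : Y (P (Q w)) = Y (Q w) := by
          rw [← ContinuousLinearMap.mul_apply, hyp]
        rw [hYPapp, show P (Q w) + Y (Q w) = (P + Y) (Q w) from
          (ContinuousLinearMap.add_apply _ _ _).symm, hpy,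
          show (Q*P*B) (Q w) = ((Q*P*B)*Q) w from
          (ContinuousLinearMap.mul_apply _ _ _).symm, hqpbq]
      · rintro ⟨⟨v, hv⟩, rfl⟩
        obtain ⟨w, rfl⟩ := LinearMap.mem_range.mp hv
        refine ⟨P (B (P w)), ?_⟩
        rw [hXapp]
        show Q (P (B (P w))) = (⟨P w, hv⟩ : ↥(LinearMap.range (P : H →ₗ[ℂ] H))) + Y (P w)
        calc Q (P (B (P w))) = (Q*P*B) (P w) := by
              simp only [ContinuousLinearMap.mul_apply]
          _ = (P + Y) (P w) := by rw [hpy]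
          _ = P (P w) + Y (P w) := ContinuousLinearMap.add_apply _ _ _
          _ = P w + Y (P w) := by rw [ePP]
    · -- the norm identity
      have hXle : ‖X‖ ≤ m := by
        rw [hm]
        refine ContinuousLinearMap.opNorm_le_bound _ (norm_nonneg Y) (fun f => ?_)
        calc ‖X f‖ = ‖(X f : H)‖ := rfl
          _ = ‖Y (f : H)‖ := by rw [hXapp]
          _ ≤ ‖Y‖ * ‖(f : H)‖ := ContinuousLinearMap.le_opNorm _ _
          _ = ‖Y‖ * ‖f‖ := rfl
      have hXge : m ≤ ‖X‖ := by
        rw [hm]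
        refine ContinuousLinearMap.opNorm_le_bound _ (norm_nonneg X) (fun x => ?_)
        have h1 : Y (P x) = Y x := by rw [← ContinuousLinearMap.mul_apply, hyp]
        set f0 : ↥(LinearMap.range (P : H →ₗ[ℂ] H)) := ⟨P x, LinearMap.mem_range.mpr ⟨x, rfl⟩⟩ with hf0
        calc ‖Y x‖ = ‖Y (P x)‖ := by rw [h1]
          _ = ‖(X f0 : H)‖ := by rw [hXapp]
          _ = ‖X f0‖ := rfl
          _ ≤ ‖X‖ * ‖f0‖ := ContinuousLinearMap.le_opNorm _ _
          _ = ‖X‖ * ‖P x‖ := rfl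
          _ ≤ ‖X‖ * ‖x‖ := mul_le_mul_of_nonneg_left (contr P hP hP2 x) (norm_nonneg X)
      have hXm : ‖X‖ = m := le_antisymm hXle hXge
      rw [hXm]
      have hge0 : 0 ≤ m := hm ▸ norm_nonneg Y
      have hmm : m^2*(1-‖P-Q‖^2) = ‖P-Q‖^2 := by
        rw [hm2eq]; field_simp
      have hs0 : 0 < Real.sqrt (1+m^2) := Real.sqrt_pos.mpr (by positivity)
      rw [eq_div_iff (ne_of_gt hs0)]
      have hsq3 : (‖P-Q‖ * Real.sqrt (1+m^2))^2 = m^2 := by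
        rw [mul_pow, Real.sq_sqrt (by positivity)]
        nlinarith [hmm]
      calc ‖P-Q‖ * Real.sqrt (1+m^2)
          = Real.sqrt ((‖P-Q‖ * Real.sqrt (1+m^2))^2) := (Real.sqrt_sq (by positivity)).symm
        _ = Real.sqrt (m^2) := by rw [hsq3]
        _ = m := Real.sqrt_sq hge0
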